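/- For multi-indices μ, ν ∈ ℕ³ with n = |ν|, the partial derivative ∂_ν P_μ (where ∂_ν = ∂^{|ν|}/∂x₁^{n₁}∂x₂^{n₂}∂x₃^{n₃}) equals (−1)^n P_{μ−ν} if μ ≥ ν componentwise, and equals 0 otherwise. -/

import Mathlib

open Quaternion

noncomputable section

abbrev Hq := Quaternion ℝ

/-- The quaternion units `e₁ = i`, `e₂ = j`, `e₃ = k` (with `e₀ = 1`). -/
def e : Fin 4 → Hq := ![1, ⟨0,1,0,0⟩, ⟨0,0,1,0⟩, ⟨0,0,0,1⟩]

/-- Real coordinates of a quaternion `q = t + i x₁ + j x₂ + k x₃`. -/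
def coord (q : Hq) : Fin 4 → ℝ := ![q.re, q.imI, q.imJ, q.imK]

/-- The regular variables `z_i(q) = t e_i - x_i` (here `i : Fin 3` corresponds to `i+1`). -/
def z (i : Fin 3) (q : Hq) : Hq := q.re • e i.succ - coord q i.succ • (1 : Hq)

/-- `|ν| = n₁ + n₂ + n₃` for a multi-index `ν ∈ ℕ³`. -/
def msum (ν : Fin 3 → ℕ) : ℕ := ν 0 + ν 1 + ν 2

/-- The regular homogeneous polynomial `P_ν(q)`. -/
def Pp (ν : Fin 3 → ℕ) (q : Hq) : Hq :=
  ((msum ν).factorial : ℝ)⁻¹ •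
    ∑ f ∈ Finset.univ.filter
        (fun f : Fin (msum ν) → Fin 3 =>
          ∀ j, (Finset.univ.filter fun i => f i = j).card = ν j),
      ((List.ofFn f).map (fun i => z i q)).prod

/-- The partial derivative `∂/∂x_{i+1}` of an `ℍ`-valued function. -/
def pd (i : Fin 3) (f : Hq → Hq) : Hq → Hq := fun q => fderiv ℝ f q (e i.succ)

/-- The iterated partial derivative `∂_ν = ∂^{|ν|}/∂x₁^{n₁} ∂x₂^{n₂} ∂x₃^{n₃}`. -/
def pdnu (ν : Fin 3 → ℕ) (f : Hq → Hq) : Hq → Hq :=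
  (pd 0)^[ν 0] ((pd 1)^[ν 1] ((pd 2)^[ν 2] f))

lemma coord_add (a b : Hq) (k : Fin 4) : coord (a+b) k = coord a k + coord b k := by
  fin_cases k <;> simp [coord]

lemma coord_smul (r : ℝ) (a : Hq) (k : Fin 4) : coord (r • a) k = r * coord a k := by
  fin_cases k <;> simp [coord]

def zL (i : Fin 3) : Hq →L[ℝ] Hq :=
  LinearMap.toContinuousLinearMap
    { toFun := z i
      map_add' := fun a b => by
        simp only [z, coord_add, Quaternion.re_add, add_smul]; abel
      map_smul' := fun r a => by
        simp only [z, coord_smul, Quaternion.re_smul, RingHom.id_apply, smul_eq_mul]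
        module }

lemma z_eq_zL (i : Fin 3) (q : Hq) : z i q = zL i q := rfl

lemma zL_apply_e (i j : Fin 3) : zL i (e j.succ) = if i = j then (-1 : Hq) else 0 := by
  fin_cases i <;> fin_cases j <;>
    simp [zL, z, e, coord, Quaternion.ext_iff]
  all_goals exact ⟨zero_mul _, zero_mul _, zero_mul _, zero_mul _⟩

def Fz {m : ℕ} (f : Fin m → Fin 3) (q : Hq) : Hq :=
  ((List.ofFn f).map (fun i => z i q)).prod

def G {m : ℕ} (f : Fin m → Fin 3) (k : ℕ) (q : Hq) : Hq :=
  (((List.ofFn f).take k).map (fun i => z i q)).prod *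
    (((List.ofFn f).drop (k+1)).map (fun i => z i q)).prod

lemma hasFDerivAt_Fz {m : ℕ} (f : Fin m → Fin 3) (q : Hq) :
    HasFDerivAt (Fz f)
      (∑ k : Fin (List.ofFn f).length,
        (((List.ofFn f).take (k:ℕ)).map (fun i => z i q)).prod •
          ((zL ((List.ofFn f)[(k:ℕ)])).smulRight
            (((List.ofFn f).drop ((k:ℕ)+1)).map (fun i => z i q)).prod)) q := by
  have := HasFDerivAt.list_prod' (𝕜 := ℝ) (l := List.ofFn f) (f := fun i q => z i q)
    (f' := fun i => zL i) (x := q) (fun i _ => (zL i).hasFDerivAt)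
  exact this

lemma pd_Fz {m : ℕ} (j : Fin 3) (f : Fin m → Fin 3) (q : Hq) :
    pd j (Fz f) q = ∑ k : Fin m, if f k = j then -G f k q else 0 := by
  have h := (hasFDerivAt_Fz f q).fderiv
  simp only [pd, h, ContinuousLinearMap.sum_apply]
  refine Fintype.sum_equiv (finCongr (List.length_ofFn (f := f))) _ _ (fun k => ?_)
  simp only [ContinuousLinearMap.smul_apply, ContinuousLinearMap.smulRight_apply, smul_eq_mul,
    List.getElem_ofFn, zL_apply_e]
  have : f ⟨(k : ℕ), by simpa using k.isLt⟩ = f (finCongr (List.length_ofFn (f := f)) k) := rfl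
  rw [this]
  by_cases hfk : f (Fin.cast (List.length_ofFn (f := f)) k) = j <;>
    simp [hfk, G, finCongr, mul_neg, neg_one_mul]

lemma take_ofFn_removeNth {m : ℕ} (f : Fin (m+1) → Fin 3) (k : Fin (m+1)) :
    (List.ofFn f).take (k:ℕ) = (List.ofFn (k.removeNth f)).take (k:ℕ) := by
  apply List.ext_getElem
  · simp; omega
  · intro i h1 h2
    simp only [List.getElem_take, List.getElem_ofFn]
    simp only [List.length_take, List.length_ofFn, lt_min_iff] at h1 h2
    show f _ = f (k.succAbove _)
    congr 1
    apply Fin.ext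
    rw [Fin.succAbove_of_castSucc_lt _ _ (by simp only [Fin.lt_def, Fin.coe_castSucc]; omega)]
    simp

lemma drop_ofFn_removeNth {m : ℕ} (f : Fin (m+1) → Fin 3) (k : Fin (m+1)) :
    (List.ofFn f).drop ((k:ℕ)+1) = (List.ofFn (k.removeNth f)).drop (k:ℕ) := by
  apply List.ext_getElem
  · simp only [List.length_drop, List.length_ofFn]; omega
  · intro i h1 h2
    simp only [List.getElem_drop, List.getElem_ofFn]
    simp only [List.length_drop, List.length_ofFn] at h1 h2
    show f _ = f (k.succAbove _)
    congr 1
    apply Fin.ext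
    rw [Fin.succAbove_of_le_castSucc _ _ (by simp only [Fin.le_def, Fin.coe_castSucc]; omega)]
    simp only [Fin.val_succ]; omega

lemma G_eq_Fz_removeNth {m : ℕ} (f : Fin (m+1) → Fin 3) (k : Fin (m+1)) (q : Hq) :
    G f (k:ℕ) q = Fz (k.removeNth f) q := by
  unfold G Fz
  rw [take_ofFn_removeNth f k, drop_ofFn_removeNth f k, List.map_take, List.map_drop,
    List.prod_take_mul_prod_drop]

def Tf (n : ℕ) (c : Fin 3 → ℕ) : Finset (Fin n → Fin 3) :=
  Finset.univ.filter (fun f => ∀ j, (Finset.univ.filter fun i => f i = j).card = c j)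

lemma mem_Tf_removeNth {m : ℕ} {c : Fin 3 → ℕ} (j : Fin 3) (k : Fin (m+1))
    (f : Fin (m+1) → Fin 3) (hf : f ∈ Tf (m+1) c) (hk : f k = j) :
    k.removeNth f ∈ Tf m (c - Pi.single j 1) := by
  simp only [Tf, Finset.mem_filter, Finset.mem_univ, true_and] at *
  intro j'
  have h1 := hf j'
  rw [Finset.card_filter, Fin.sum_univ_succAbove _ k] at h1
  rw [Finset.card_filter]
  have h2 : ∀ i : Fin m, k.removeNth f i = f (k.succAbove i) := fun i => rfl
  simp only [h2]
  by_cases h : j' = j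
  · subst h
    rw [if_pos hk] at h1
    simp only [Pi.sub_apply, Pi.single_eq_same]
    omega
  · rw [if_neg (by rw [hk]; exact fun e => h e.symm)] at h1
    simp only [Pi.sub_apply, Pi.single_eq_of_ne h]
    omega

lemma mem_Tf_insertNth {m : ℕ} {c : Fin 3 → ℕ} (j : Fin 3) (hj : 1 ≤ c j) (k : Fin (m+1))
    (g : Fin m → Fin 3) (hg : g ∈ Tf m (c - Pi.single j 1)) :
    k.insertNth j g ∈ Tf (m+1) c := by
  simp only [Tf, Finset.mem_filter, Finset.mem_univ, true_and] at *
  intro j'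
  have h1 := hg j'
  rw [Finset.card_filter] at h1 ⊢
  rw [Fin.sum_univ_succAbove _ k]
  simp only [Fin.insertNth_apply_same, Fin.insertNth_apply_succAbove]
  by_cases h : j' = j
  · subst h
    rw [if_pos rfl]
    simp only [Pi.sub_apply, Pi.single_eq_same] at h1
    omega
  · rw [if_neg (fun e => h e.symm)]
    simp only [Pi.sub_apply, Pi.single_eq_of_ne h] at h1
    omega

lemma key {m : ℕ} (c : Fin 3 → ℕ) (j : Fin 3) (hj : 1 ≤ c j) (q : Hq) :
    ∑ f ∈ Tf (m+1) c, ∑ k : Fin (m+1), (if f k = j then -G f (k:ℕ) q else 0)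
      = -((m+1) • ∑ g ∈ Tf m (c - Pi.single j 1), Fz g q) := by
  have step1 : ∀ f : Fin (m+1) → Fin 3,
      ∑ k : Fin (m+1), (if f k = j then -G f (k:ℕ) q else 0)
        = -∑ k ∈ Finset.univ.filter (fun k => f k = j), G f (k:ℕ) q := by
    intro f
    rw [Finset.sum_filter, ← Finset.sum_neg_distrib]
    congr 1
    funext k
    by_cases h : f k = j <;> simp [h]
  simp only [step1, ← Finset.sum_neg_distrib]
  -- congr 1 (no-op removed)
  rw [Finset.sum_sigma']
  have sum_const : ∑ g ∈ Tf m (c - Pi.single j 1), ∑ _k : Fin (m+1), Fz g q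
      = (m+1) • ∑ g ∈ Tf m (c - Pi.single j 1), Fz g q := by
    rw [Finset.smul_sum]
    refine Finset.sum_congr rfl (fun g _ => ?_)
    rw [Finset.sum_const, Finset.card_univ, Fintype.card_fin]
  rw [← sum_const, Finset.sum_sigma']
  rw [← Finset.sum_neg_distrib]
  refine Finset.sum_bij'
    (i := fun (x : Σ _f : Fin (m+1) → Fin 3, Fin (m+1)) (_ : x ∈ (Tf (m+1) c).sigma
        (fun f => Finset.univ.filter (fun k => f k = j))) =>
      (⟨x.2.removeNth x.1, x.2⟩ : Σ _g : Fin m → Fin 3, Fin (m+1)))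
    (j := fun (y : Σ _g : Fin m → Fin 3, Fin (m+1)) (_ : y ∈ (Tf m (c - Pi.single j 1)).sigma
        (fun _ => (Finset.univ : Finset (Fin (m+1))))) =>
      (⟨y.2.insertNth j y.1, y.2⟩ : Σ _f : Fin (m+1) → Fin 3, Fin (m+1)))
    ?_ ?_ ?_ ?_ ?_
  · rintro ⟨f, k⟩ hx
    simp only [Finset.mem_sigma, Finset.mem_filter, Finset.mem_univ, true_and] at hx ⊢
    exact ⟨mem_Tf_removeNth j k f (by simpa [Tf] using hx.1) hx.2, trivial⟩
  · rintro ⟨g, k⟩ hy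
    simp only [Finset.mem_sigma, Finset.mem_filter, Finset.mem_univ, true_and] at hy ⊢
    refine ⟨by simpa [Tf] using mem_Tf_insertNth j hj k g (by simpa [Tf] using hy.1), ?_⟩
    exact Fin.insertNth_apply_same (α := fun _ => Fin 3) k j g
  · rintro ⟨f, k⟩ hx
    simp only [Finset.mem_sigma, Finset.mem_filter, Finset.mem_univ, true_and] at hx
    have : k.insertNth j (k.removeNth f) = f := by
      rw [← hx.2]; exact Fin.insertNth_self_removeNth k f
    simp [this]
  · rintro ⟨g, k⟩ hy
    simp
  · rintro ⟨f, k⟩ hx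
    exact congrArg Neg.neg (G_eq_Fz_removeNth f k q)

lemma Pp_eq (ν : Fin 3 → ℕ) :
    Pp ν = fun q => ((msum ν).factorial : ℝ)⁻¹ • ∑ f ∈ Tf (msum ν) ν, Fz f q := rfl

lemma pd_Pp_apply (j : Fin 3) (μ : Fin 3 → ℕ) (q : Hq) :
    pd j (Pp μ) q = ((msum μ).factorial : ℝ)⁻¹ •
      ∑ f ∈ Tf (msum μ) μ, ∑ k : Fin (msum μ), (if f k = j then -G f (k:ℕ) q else 0) := by
  have hD := (HasFDerivAt.fun_sum (fun f (_ : f ∈ Tf (msum μ) μ) =>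
    hasFDerivAt_Fz f q)).fun_const_smul (((msum μ).factorial : ℝ)⁻¹)
  rw [Pp_eq]
  show fderiv ℝ _ q (e j.succ) = _
  rw [hD.fderiv]
  rw [ContinuousLinearMap.coe_smul', Pi.smul_apply, ContinuousLinearMap.sum_apply]
  refine congrArg _ (Finset.sum_congr rfl fun f _ => ?_)
  have h1 := (hasFDerivAt_Fz f q).fderiv
  rw [← pd_Fz j f q]
  show _ = fderiv ℝ (Fz f) q (e j.succ)
  rw [h1]

lemma differentiable_Pp (μ : Fin 3 → ℕ) : Differentiable ℝ (Pp μ) := by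
  intro q
  have hD := (HasFDerivAt.fun_sum (fun f (_ : f ∈ Tf (msum μ) μ) =>
    hasFDerivAt_Fz f q)).fun_const_smul (((msum μ).factorial : ℝ)⁻¹)
  rw [Pp_eq]
  exact hD.differentiableAt

lemma pd_Pp_zero (j : Fin 3) (μ : Fin 3 → ℕ) (h : μ j = 0) : pd j (Pp μ) = 0 := by
  funext q
  rw [pd_Pp_apply]
  have : ∀ f ∈ Tf (msum μ) μ,
      ∑ k : Fin (msum μ), (if f k = j then -G f (k:ℕ) q else 0) = 0 := by
    intro f hf
    refine Finset.sum_eq_zero (fun k _ => ?_)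
    have hfk : f k ≠ j := by
      intro e
      have := (Finset.mem_filter.mp hf).2 j
      rw [h, Finset.card_eq_zero] at this
      have : k ∈ Finset.univ.filter (fun i => f i = j) := by simp [e]
      simp [‹Finset.filter _ _ = ∅›] at this
    rw [if_neg hfk]
  rw [Finset.sum_congr rfl this]
  simp

lemma pd_Pp_pos (j : Fin 3) (μ : Fin 3 → ℕ) (h : 1 ≤ μ j) :
    pd j (Pp μ) = fun q => -Pp (μ - Pi.single j 1) q := by
  funext q
  rw [pd_Pp_apply]
  have hm : msum μ = msum (μ - Pi.single j 1) + 1 := by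
    have hsub : ∀ i : Fin 3, (μ - Pi.single j 1 : Fin 3 → ℕ) i = μ i - (if i = j then 1 else 0) := by
      intro i
      by_cases hij : i = j
      · subst hij; simp
      · simp [Pi.single_eq_of_ne hij, if_neg hij]
    have hj3 : j = 0 ∨ j = 1 ∨ j = 2 := by
      rcases j with ⟨jv, hjv⟩
      interval_cases jv <;> simp [Fin.ext_iff]
    simp only [msum, hsub]
    rcases hj3 with rfl | rfl | rfl <;> simp <;> omega
  rw [hm, key μ j h q, Pp_eq]
  rw [smul_neg, ← Nat.cast_smul_eq_nsmul ℝ, smul_smul]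
  congr 2
  rw [Nat.factorial_succ]
  have h0 : ((msum (μ - Pi.single j 1)).factorial : ℝ) ≠ 0 := by
    exact_mod_cast Nat.factorial_ne_zero _
  push_cast
  field_simp

lemma pd_zero_fn (j : Fin 3) : pd j (0 : Hq → Hq) = 0 := by
  funext q
  show fderiv ℝ (0 : Hq → Hq) q (e j.succ) = 0
  have : (0 : Hq → Hq) = fun _ => (0 : Hq) := rfl
  rw [this, fderiv_fun_const]
  simp

lemma iter_zero_fn (j : Fin 3) (n : ℕ) : (pd j)^[n] (0 : Hq → Hq) = 0 :=
  Function.iterate_fixed (pd_zero_fn j) n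

lemma sub_single_sub_single (μ : Fin 3 → ℕ) (j : Fin 3) (a b : ℕ) :
    ((μ - Pi.single j a - Pi.single j b) : Fin 3 → ℕ) = μ - Pi.single j (a + b) := by
  funext i
  by_cases hij : i = j
  · subst hij; simp [Pi.sub_apply]; omega
  · simp [Pi.sub_apply, Pi.single_eq_of_ne hij]

lemma iter_general (j : Fin 3) (n : ℕ) (c : ℝ) (μ : Fin 3 → ℕ) :
    (pd j)^[n] (fun q => c • Pp μ q) =
      if n ≤ μ j then (fun q => (((-1 : ℝ)^n) * c) • Pp (μ - Pi.single j n) q) else 0 := by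
  induction n generalizing c μ with
  | zero =>
    rw [if_pos (Nat.zero_le _)]
    simp
  | succ n ih =>
    rw [Function.iterate_succ_apply]
    have hpd : pd j (fun q => c • Pp μ q) = fun q => c • pd j (Pp μ) q := by
      funext q
      show fderiv ℝ (fun q => c • Pp μ q) q (e j.succ) = _
      rw [fderiv_fun_const_smul (differentiable_Pp μ q)]
      simp [pd]
    rw [hpd]
    by_cases h : 1 ≤ μ j
    · have hstep : (fun q => c • pd j (Pp μ) q)
          = fun q => (-c) • Pp (μ - Pi.single j 1) q := by
        rw [pd_Pp_pos j μ h]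
        funext q
        simp [smul_neg, neg_smul]
      rw [hstep, ih]
      have hiff : n ≤ (μ - Pi.single j 1 : Fin 3 → ℕ) j ↔ n + 1 ≤ μ j := by
        simp [Pi.sub_apply, Pi.single_eq_same]
        omega
      by_cases h2 : n + 1 ≤ μ j
      · rw [if_pos (hiff.mpr h2), if_pos h2]
        rw [sub_single_sub_single μ j 1 n]
        have hs : ((-1:ℝ)^n * (-c)) = ((-1)^(n+1) * c) := by ring
        rw [hs]
        have : 1 + n = n + 1 := by omega
        rw [this]
      · rw [if_neg (fun hh => h2 (hiff.mp hh)), if_neg h2]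
    · have h0 : μ j = 0 := by omega
      rw [pd_Pp_zero j μ h0]
      have : (fun q => c • (0 : Hq → Hq) q) = (0 : Hq → Hq) := by
        funext q; simp
      rw [this, iter_zero_fn]
      rw [if_neg (by omega)]

/-- `∂_ν P_μ = (-1)^{|ν|} P_{μ-ν}` if `μ ≥ ν` componentwise, and `0` otherwise. -/
theorem pdnu_Pp (μ ν : Fin 3 → ℕ) :
    pdnu ν (Pp μ) =
      if ∀ i, ν i ≤ μ i then (fun q => ((-1 : ℝ) ^ msum ν) • Pp (μ - ν) q)
      else 0 := by
  show (pd 0)^[ν 0] ((pd 1)^[ν 1] ((pd 2)^[ν 2] (Pp μ))) = _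
  have h1 : Pp μ = fun q => (1:ℝ) • Pp μ q := by funext q; rw [one_smul]
  rw [h1, iter_general 2 (ν 2) 1 μ]
  by_cases h2 : ν 2 ≤ μ 2
  · rw [if_pos h2, iter_general 1 (ν 1) _ _]
    have e21 : (μ - Pi.single 2 (ν 2) : Fin 3 → ℕ) 1 = μ 1 := by
      simp [Pi.sub_apply, Pi.single_eq_of_ne (show (1 : Fin 3) ≠ 2 by decide)]
    by_cases hy1 : ν 1 ≤ μ 1
    · rw [if_pos (by rw [e21]; exact hy1), iter_general 0 (ν 0) _ _]
      have e10 : (μ - Pi.single 2 (ν 2) - Pi.single 1 (ν 1) : Fin 3 → ℕ) 0 = μ 0 := by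
        simp [Pi.sub_apply, Pi.single_eq_of_ne (show (0 : Fin 3) ≠ 2 by decide),
          Pi.single_eq_of_ne (show (0 : Fin 3) ≠ 1 by decide)]
      by_cases hy0 : ν 0 ≤ μ 0
      · rw [if_pos (by rw [e10]; exact hy0),
          if_pos (by
            intro i
            rcases i with ⟨iv, hiv⟩
            interval_cases iv
            · exact hy0
            · exact hy1
            · exact h2)]
        have hμ : (μ - Pi.single 2 (ν 2) - Pi.single 1 (ν 1) - Pi.single 0 (ν 0) : Fin 3 → ℕ)
            = μ - ν := by
          funext i
          rcases i with ⟨iv, hiv⟩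
          have hν : (ν : Fin 3 → ℕ) = fun i => ν i := rfl
          interval_cases iv <;>
            simp [Pi.sub_apply, Pi.single_apply, Fin.ext_iff]
        have hc : ((-1:ℝ)^(ν 0) * ((-1)^(ν 1) * ((-1)^(ν 2) * 1))) = (-1)^(msum ν) := by
          rw [msum, pow_add, pow_add]; ring
        rw [hμ, hc]
      · rw [if_neg (by rw [e10]; exact hy0),
          if_neg (by intro hall; exact hy0 (hall 0))]
    · rw [if_neg (by rw [e21]; exact hy1), iter_zero_fn,
        if_neg (by intro hall; exact hy1 (hall 1))]
  · rw [if_neg h2, iter_zero_fn, iter_zero_fn,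
      if_neg (by intro hall; exact h2 (hall 2))]
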